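/- For every Z ∈ H²×H² there exists λ > 0 such that for every g ∈ Γ, if the open Euclidean ball B(Z,λ) meets g(F) then Z ∈ g(F). -/

import Mathlib

noncomputable section

open scoped Classical
open MeasureTheory

namespace Hilbert

/-- `k₀ = 2` if `k ≡ 1 (mod 4)` and `k₀ = 1` otherwise. -/
def k0 (k : ℕ) : ℝ := if k % 4 = 1 then 2 else 1

/-- `ω = (1 + √k)/k₀`. -/
def omg (k : ℕ) : ℝ := (1 + Real.sqrt k) / k0 k

/-- `ω' = (1 - √k)/k₀`, the algebraic conjugate of `ω`. -/
def omg' (k : ℕ) : ℝ := (1 - Real.sqrt k) / k0 k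

/-- The ring `R = ℤ[ω]`, realized inside `ℝ × ℝ` via the pair of real embeddings
`α ↦ (α, α')` of `K = ℚ(√k)`. -/
def R (k : ℕ) : Subring (ℝ × ℝ) := Subring.closure {(omg k, omg' k)}

/-- The ambient space `ℝ⁴`, with coordinates `(x₁, x₂, y₁, y₂)`. -/
abbrev Pt : Type := ℝ × ℝ × ℝ × ℝ

def x1 (p : Pt) : ℝ := p.1
def x2 (p : Pt) : ℝ := p.2.1
def y1 (p : Pt) : ℝ := p.2.2.1
def y2 (p : Pt) : ℝ := p.2.2.2

/-- `H² × H²`, identified with an open subset of `ℝ⁴`. -/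
def HH : Set Pt := {p | 0 < y1 p ∧ 0 < y2 p}

/-- The coordinate `s₁`, determined by `x₁ = s₁ + s₂ ω`, `x₂ = s₁ + s₂ ω'`. -/
def s1 (k : ℕ) (p : Pt) : ℝ := (omg' k * x1 p - omg k * x2 p) / (omg' k - omg k)

/-- The coordinate `s₂`. -/
def s2 (k : ℕ) (p : Pt) : ℝ := (x1 p - x2 p) / (omg k - omg' k)

/-- The ratio `r = y₁/y₂`. -/
def rr (p : Pt) : ℝ := y1 p / y2 p

/-- The height `h = y₁ y₂`. -/
def hh (p : Pt) : ℝ := y1 p * y2 p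

/-- `‖cZ+d‖ = ((cx₁+d)² + c²y₁²)((c'x₂+d')² + c'²y₂²)`, where `c = (c, c')`, `d = (d, d')`
are given by their two real embeddings. -/
def HNorm (c d : ℝ × ℝ) (p : Pt) : ℝ :=
  ((c.1 * x1 p + d.1) ^ 2 + c.1 ^ 2 * y1 p ^ 2) *
    ((c.2 * x2 p + d.2) ^ 2 + c.2 ^ 2 * y2 p ^ 2)

/-- `S = {(c,d) ∈ R² : cR + dR = R}`. -/
def Spairs (k : ℕ) : Set (R k × R k) := {cd | Ideal.span {cd.1, cd.2} = ⊤}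

/-- `V_{c,d}^≥ = {Z ∈ H²×H² : ‖cZ+d‖ ≥ 1}`. -/
def Vge (k : ℕ) (cd : R k × R k) : Set Pt :=
  {p ∈ HH | 1 ≤ HNorm (cd.1 : ℝ × ℝ) (cd.2 : ℝ × ℝ) p}

/-- `V_{c,d}^≤ = {Z ∈ H²×H² : ‖cZ+d‖ ≤ 1}`. -/
def Vle (k : ℕ) (cd : R k × R k) : Set Pt :=
  {p ∈ HH | HNorm (cd.1 : ℝ × ℝ) (cd.2 : ℝ × ℝ) p ≤ 1}

/-- `V_{c,d} = {Z ∈ H²×H² : ‖cZ+d‖ = 1}`. -/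
def Veq (k : ℕ) (cd : R k × R k) : Set Pt :=
  {p ∈ HH | HNorm (cd.1 : ℝ × ℝ) (cd.2 : ℝ × ℝ) p = 1}

/-- `F₀ = {Z ∈ H²×H² : ‖cZ+d‖ ≥ 1 for all (c,d) ∈ S}`. -/
def F0 (k : ℕ) : Set Pt :=
  {p ∈ HH | ∀ cd ∈ Spairs k, 1 ≤ HNorm (cd.1 : ℝ × ℝ) (cd.2 : ℝ × ℝ) p}

/-- `F_∞ = {(s₁,s₂,r,h) : |s₁| ≤ 1/2, |s₂| ≤ 1/2, ε₀⁻² ≤ r ≤ ε₀²}`, where `ε` stands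
for the fundamental unit `ε₀`. -/
def FInf (k : ℕ) (ε : ℝ) : Set Pt :=
  {p ∈ HH | |s1 k p| ≤ 1 / 2 ∧ |s2 k p| ≤ 1 / 2 ∧ (ε ^ 2)⁻¹ ≤ rr p ∧ rr p ≤ ε ^ 2}

/-- `F = F_∞ ∩ F₀`. -/
def F (k : ℕ) (ε : ℝ) : Set Pt := FInf k ε ∩ F0 k

/-- `SL₂(R)`. -/
abbrev SL (k : ℕ) := Matrix.SpecialLinearGroup (Fin 2) (R k)

/-- Möbius action on the upper half-plane: image of `x + y i` under `(a b; c d)`. -/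
def moeb (a b c d x y : ℝ) : ℝ × ℝ :=
  (((a * x + b) * (c * x + d) + a * c * y ^ 2) / ((c * x + d) ^ 2 + c ^ 2 * y ^ 2),
    y / ((c * x + d) ^ 2 + c ^ 2 * y ^ 2))

/-- The action of `γ ∈ SL₂(R)` on `H²×H²`: `γ` acts on the first factor through the first
embedding and through the conjugate matrix `γ'` (second embedding) on the second factor.
This descends to the Hilbert modular group `PSL₂(R)`. -/
def act (k : ℕ) (g : SL k) (p : Pt) : Pt :=
  ((moeb (g.1 0 0 : ℝ × ℝ).1 (g.1 0 1 : ℝ × ℝ).1 (g.1 1 0 : ℝ × ℝ).1 (g.1 1 1 : ℝ × ℝ).1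
      (x1 p) (y1 p)).1,
   (moeb (g.1 0 0 : ℝ × ℝ).2 (g.1 0 1 : ℝ × ℝ).2 (g.1 1 0 : ℝ × ℝ).2 (g.1 1 1 : ℝ × ℝ).2
      (x2 p) (y2 p)).1,
   (moeb (g.1 0 0 : ℝ × ℝ).1 (g.1 0 1 : ℝ × ℝ).1 (g.1 1 0 : ℝ × ℝ).1 (g.1 1 1 : ℝ × ℝ).1
      (x1 p) (y1 p)).2,
   (moeb (g.1 0 0 : ℝ × ℝ).2 (g.1 0 1 : ℝ × ℝ).2 (g.1 1 0 : ℝ × ℝ).2 (g.1 1 1 : ℝ × ℝ).2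
      (x2 p) (y2 p)).2)

/-- The pair of real embeddings of a unit of `R`. -/
def unitVal (k : ℕ) (u : (R k)ˣ) : ℝ × ℝ := ((u : R k) : ℝ × ℝ)

/-- `e` is the fundamental unit of `R`: the smallest unit of `R` greater than `1`
(with respect to the first embedding). -/
def IsFundUnit (k : ℕ) (e : (R k)ˣ) : Prop :=
  1 < (unitVal k e).1 ∧
    ∀ v : (R k)ˣ, 1 < (unitVal k v).1 → (unitVal k e).1 ≤ (unitVal k v).1

/-- The real number `ε₀ > 1`, the fundamental unit under the first embedding. -/
def eps (k : ℕ) (e : (R k)ˣ) : ℝ := (unitVal k e).1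


/-- The norm `N(c) = c c'` of an element of `R` (as a real number). -/
def Nm (k : ℕ) (c : R k) : ℝ := ((c : ℝ × ℝ)).1 * ((c : ℝ × ℝ)).2

/-- A subset `C` of `H²×H²` is hyperbolically bounded if it is bounded in the
Euclidean metric and `y₁, y₂ > ε` on `C` for some `ε > 0`. -/
def HypBounded (C : Set Pt) : Prop :=
  C ⊆ HH ∧ Bornology.IsBounded C ∧ ∃ ε > (0 : ℝ), ∀ p ∈ C, ε < y1 p ∧ ε < y2 p

/-- `V_{C,μ} = {(c,d) ∈ R × R : ‖cZ+d‖ ≤ μ for some Z ∈ C}`. -/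
def VCmu (k : ℕ) (C : Set Pt) (μ : ℝ) : Set (R k × R k) :=
  {cd | ∃ p ∈ C, HNorm (cd.1 : ℝ × ℝ) (cd.2 : ℝ × ℝ) p ≤ μ}

/-- The conditions (8) of Theorem `FiniteSides` on a pair `(c,d) ∈ R²`. -/
def SCond (k : ℕ) (ε : ℝ) (cd : R k × R k) : Prop :=
  cd.1 ≠ 0 ∧ Ideal.span {cd.1, cd.2} = ⊤ ∧
    |Nm k cd.1| ≤ 2 * k / (k0 k) ^ 2 ∧
    |((cd.2 : ℝ × ℝ)).1 / ((cd.1 : ℝ × ℝ)).1| <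
      ε * Real.sqrt (2 * k / (Nm k cd.1 ^ 2 * (k0 k) ^ 2) - (k0 k) ^ 2 / (2 * k)) +
        (1 + omg k) / 2 ∧
    |((cd.2 : ℝ × ℝ)).2 / ((cd.1 : ℝ × ℝ)).2| <
      ε * Real.sqrt (2 * k / (Nm k cd.1 ^ 2 * (k0 k) ^ 2) - (k0 k) ^ 2 / (2 * k)) +
        (1 - omg' k) / 2

/-- `S₁` is a set of representatives, up to multiplication by units of `R`, of the pairs
`(c,d) ∈ R²` satisfying the conditions `SCond`. -/
def IsRepSet (k : ℕ) (ε : ℝ) (S1 : Set (R k × R k)) : Prop :=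
  (∀ cd ∈ S1, SCond k ε cd) ∧
    (∀ cd : R k × R k, SCond k ε cd →
      ∃ ab ∈ S1, ∃ u : (R k)ˣ, cd.1 = (u : R k) * ab.1 ∧ cd.2 = (u : R k) * ab.2) ∧
    (∀ ab ∈ S1, ∀ ab' ∈ S1,
      (∃ u : (R k)ˣ, ab'.1 = (u : R k) * ab.1 ∧ ab'.2 = (u : R k) * ab.2) → ab = ab')

/-- The family `𝒱_∞ = {V_i^± : i = 1,2,3}`. -/
def VfamInf (k : ℕ) (ε : ℝ) : Set (Set Pt) :=
  { {p ∈ HH | s1 k p = 1 / 2}, {p ∈ HH | s1 k p = -(1 / 2)},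
    {p ∈ HH | s2 k p = 1 / 2}, {p ∈ HH | s2 k p = -(1 / 2)},
    {p ∈ HH | rr p = ε ^ 2}, {p ∈ HH | rr p = (ε ^ 2)⁻¹} }

/-- The family `𝒱 = {V_{c,d} : (c,d) ∈ S, c ≠ 0}`. -/
def Vfam (k : ℕ) : Set (Set Pt) :=
  {V | ∃ cd ∈ Spairs k, cd.1 ≠ 0 ∧ V = Veq k cd}

/-- The family `𝓜 = {γ(M) : γ ∈ Γ, M ∈ 𝒱 ∪ 𝒱_∞}`. -/
def Mfam (k : ℕ) (ε : ℝ) : Set (Set Pt) :=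
  {M | ∃ g : SL k, ∃ V ∈ Vfam k ∪ VfamInf k ε, M = act k g '' V}

/-- `ω` as an element of `R`. -/
def omR (k : ℕ) : R k := ⟨(omg k, omg' k), Subring.subset_closure rfl⟩

/-- The side-pairing transformations: `γ ≠ 1` (in `PSL₂(R)`) such that `F ∩ γ⁻¹(F)` has
Hausdorff dimension `3`. -/
def SidePairings (k : ℕ) (ε : ℝ) : Set (SL k) :=
  {g | g ≠ 1 ∧ g.1 ≠ -1 ∧ dimH (F k ε ∩ act k g⁻¹ '' F k ε) = 3}


section ProofAux
set_option maxHeartbeats 1000000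

/-- integer trace of ω -/
def TT (k : ℕ) : ℤ := if k % 4 = 1 then 1 else 2
/-- integer norm of ω -/
def NN (k : ℕ) : ℤ := if k % 4 = 1 then -((k / 4 : ℕ) : ℤ) else 1 - (k : ℤ)

lemma k0_pos {k : ℕ} : 0 < k0 k := by unfold k0; split <;> norm_num

lemma omg_add {k : ℕ} : omg k + omg' k = (TT k : ℝ) := by
  unfold omg omg' k0 TT
  split <;> push_cast <;> ring

lemma omg_mul {k : ℕ} : omg k * omg' k = (NN k : ℝ) := by
  have hs : Real.sqrt k * Real.sqrt k = (k : ℝ) := Real.mul_self_sqrt (by positivity)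
  unfold omg omg' k0 NN
  split
  · rename_i h
    have h4 : (k : ℤ) = 4 * ((k / 4 : ℕ) : ℤ) + 1 := by omega
    have hk4 : ((k:ℝ)) = 4 * ((k / 4 : ℕ) : ℝ) + 1 := by exact_mod_cast h4
    simp only [Int.cast_neg, Int.cast_natCast]
    rw [div_mul_div_comm, div_eq_iff (by norm_num : (2:ℝ)*2 ≠ 0)]
    linear_combination (-1 : ℝ) * hs - hk4
  · push_cast
    rw [div_mul_div_comm, div_eq_iff (by norm_num : (1:ℝ)*1 ≠ 0)]
    linear_combination (-1 : ℝ) * hs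

lemma omg_sq {k : ℕ} : omg k ^ 2 = (TT k : ℝ) * omg k - (NN k : ℝ) := by
  have h1 := omg_add (k := k); have h2 := omg_mul (k := k)
  linear_combination omg k * h1 - h2

lemma omg'_sq {k : ℕ} : omg' k ^ 2 = (TT k : ℝ) * omg' k - (NN k : ℝ) := by
  have h1 := omg_add (k := k); have h2 := omg_mul (k := k)
  linear_combination omg' k * h1 - h2

/-- Every element of `R k` is `m + n ω` for integers `m, n`. -/
lemma exists_rep {k : ℕ} (t : R k) :
    ∃ m n : ℤ, ((t : ℝ × ℝ)).1 = (m : ℝ) + n * omg k ∧ ((t : ℝ × ℝ)).2 = (m : ℝ) + n * omg' k := by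
  obtain ⟨x, hx⟩ := t
  refine Subring.closure_induction (p := fun y _ =>
    ∃ m n : ℤ, y.1 = (m : ℝ) + n * omg k ∧ y.2 = (m : ℝ) + n * omg' k) ?_ ?_ ?_ ?_ ?_ ?_ hx
  · rintro y rfl; exact ⟨0, 1, by norm_num, by norm_num⟩
  · exact ⟨0, 0, by norm_num, by norm_num⟩
  · exact ⟨1, 0, by norm_num, by norm_num⟩
  · rintro y z _ _ ⟨m, n, h1, h2⟩ ⟨m', n', h1', h2'⟩
    exact ⟨m + m', n + n', by push_cast [Prod.fst_add, h1, h1']; ring,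
      by push_cast [Prod.snd_add, h2, h2']; ring⟩
  · rintro y _ ⟨m, n, h1, h2⟩
    exact ⟨-m, -n, by push_cast [Prod.fst_neg, h1]; ring, by push_cast [Prod.snd_neg, h2]; ring⟩
  · rintro y z _ _ ⟨m, n, h1, h2⟩ ⟨m', n', h1', h2'⟩
    refine ⟨m * m' - n * n' * NN k, m * n' + n * m' + n * n' * TT k, ?_, ?_⟩
    · have hsq := omg_sq (k := k)
      push_cast [Prod.fst_mul, h1, h1']
      linear_combination (n : ℝ) * (n' : ℝ) * hsq
    · have hsq := omg'_sq (k := k)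
      push_cast [Prod.snd_mul, h2, h2']
      linear_combination (n : ℝ) * (n' : ℝ) * hsq

lemma sqrtk_pos {k : ℕ} (hk1 : 1 < k) : 0 < Real.sqrt k :=
  Real.sqrt_pos.mpr (by exact_mod_cast Nat.zero_lt_of_lt hk1)

lemma irr_omg {k : ℕ} (hk : Squarefree k) (hk1 : 1 < k) : Irrational (omg k) := by
  have hsq : Irrational (Real.sqrt k) := by
    rw [irrational_sqrt_natCast_iff]
    rintro ⟨a, rfl⟩
    have h := hk a ⟨1, by ring⟩
    rw [Nat.isUnit_iff] at h
    subst h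
    omega
  have h1 : Irrational (1 + Real.sqrt k) := by simpa using hsq.ratCast_add 1
  unfold omg k0
  split
  · simpa using h1.div_intCast (m := 2) (by norm_num)
  · simpa using h1

lemma irr_omg' {k : ℕ} (hk : Squarefree k) (hk1 : 1 < k) : Irrational (omg' k) := by
  have heq : omg' k = (TT k : ℝ) + -(omg k) := by
    have := omg_add (k := k); linarith
  rw [heq]
  exact (irr_omg hk hk1).neg.intCast_add (TT k)

/-- nonzero elements have both embeddings nonzero -/
lemma comps_ne_zero {k : ℕ} (hk : Squarefree k) (hk1 : 1 < k) {t : R k} (ht : t ≠ 0) :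
    ((t : ℝ × ℝ)).1 ≠ 0 ∧ ((t : ℝ × ℝ)).2 ≠ 0 := by
  obtain ⟨m, n, h1, h2⟩ := exists_rep t
  rcases eq_or_ne n 0 with hn | hn
  · subst hn
    push_cast at h1 h2
    simp only [mul_zero, zero_mul, add_zero] at h1 h2
    have hm : (m : ℝ) ≠ 0 := by
      intro h0
      apply ht
      apply Subtype.ext
      have : ((t : ℝ × ℝ)) = 0 := by
        rw [Prod.ext_iff]
        constructor <;> simp [h1, h2, h0]
      simpa using this
    constructor
    · rw [h1]; simpa using hm
    · rw [h2]; simpa using hm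
  · have hiv : ∀ (w : ℝ), Irrational w → (m : ℝ) + n * w ≠ 0 := by
      intro w hw h
      refine hw ⟨(-m : ℚ) / (n : ℚ), ?_⟩
      have hnR : (n : ℝ) ≠ 0 := by exact_mod_cast hn
      push_cast
      field_simp
      linarith
    constructor
    · rw [h1]; exact hiv _ (irr_omg hk hk1)
    · rw [h2]; exact hiv _ (irr_omg' hk hk1)

lemma nm_int {k : ℕ} (t : R k) : ∃ j : ℤ, Nm k t = (j : ℝ) := by
  obtain ⟨m, n, h1, h2⟩ := exists_rep t
  refine ⟨m * m + m * n * TT k + n * n * NN k, ?_⟩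
  unfold Nm
  rw [h1, h2]
  have ha := omg_add (k := k); have hm := omg_mul (k := k)
  push_cast
  linear_combination ((m:ℝ) * n + (n:ℝ) * n * omg' k) * ha + ((n:ℝ)*n) * hm - ((n:ℝ)*n*omg' k)*ha + ((n:ℝ)*n - (n:ℝ)*n) * hm

lemma one_le_abs_nm {k : ℕ} (hk : Squarefree k) (hk1 : 1 < k) {t : R k} (ht : t ≠ 0) :
    1 ≤ |Nm k t| := by
  obtain ⟨j, hj⟩ := nm_int t
  have h0 : Nm k t ≠ 0 := by
    unfold Nm
    exact mul_ne_zero (comps_ne_zero hk hk1 ht).1 (comps_ne_zero hk hk1 ht).2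
  rw [hj] at h0 ⊢
  have : j ≠ 0 := by exact_mod_cast h0
  have := Int.one_le_abs this
  exact_mod_cast this

lemma nm_mul {k : ℕ} (s t : R k) : Nm k (s * t) = Nm k s * Nm k t := by
  unfold Nm
  simp only [Subring.coe_mul, Prod.fst_mul, Prod.snd_mul]
  ring

lemma nm_one {k : ℕ} : Nm k (1 : R k) = 1 := by unfold Nm; norm_num

lemma omg_sub_pos {k : ℕ} (hk1 : 1 < k) : 0 < omg k - omg' k := by
  unfold omg omg'
  rw [div_sub_div_same]
  apply div_pos _ k0_pos
  have := sqrtk_pos (k := k) hk1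
  linarith

lemma box_finite {k : ℕ} (hk1 : 1 < k) (A : ℝ) :
    {t : R k | |((t : ℝ × ℝ)).1| ≤ A ∧ |((t : ℝ × ℝ)).2| ≤ A}.Finite := by
  have hw := omg_sub_pos (k := k) hk1
  set nB : ℝ := (2 * |A|) / (omg k - omg' k) + 1 with hnB
  set mB : ℝ := |A| + nB * |omg k| + 1 with hmB
  set L : ℤ := max ⌈nB⌉ ⌈mB⌉ with hL
  apply Set.Finite.of_finite_image (f := fun t : R k => (t : ℝ × ℝ))
    ?_ Subtype.coe_injective.injOn
  apply Set.Finite.subset (Set.Finite.image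
    (f := fun mn : ℤ × ℤ => ((mn.1 : ℝ) + mn.2 * omg k, (mn.1 : ℝ) + mn.2 * omg' k))
    (Set.finite_Icc (-L, -L) (L, L)))
  rintro x ⟨t, ⟨ht1, ht2⟩, rfl⟩
  obtain ⟨m, n, h1, h2⟩ := exists_rep t
  have hA1 : |((t : ℝ × ℝ)).1| ≤ |A| := le_trans ht1 (le_abs_self A)
  have hA2 : |((t : ℝ × ℝ)).2| ≤ |A| := le_trans ht2 (le_abs_self A)
  have hsub : (n : ℝ) * (omg k - omg' k) = ((t : ℝ × ℝ)).1 - ((t : ℝ × ℝ)).2 := by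
    rw [h1, h2]; ring
  have hnabs : |(n : ℝ)| ≤ nB := by
    have h3 : |(n : ℝ)| * (omg k - omg' k) = |((t : ℝ × ℝ)).1 - ((t : ℝ × ℝ)).2| := by
      rw [← hsub, abs_mul, abs_of_pos hw]
    have h4 : |((t : ℝ × ℝ)).1 - ((t : ℝ × ℝ)).2| ≤ 2 * |A| := by
      calc |((t : ℝ × ℝ)).1 - ((t : ℝ × ℝ)).2| ≤ |((t : ℝ × ℝ)).1| + |((t : ℝ × ℝ)).2| :=
        abs_sub _ _
      _ ≤ 2 * |A| := by linarith
    have h5 : |(n : ℝ)| ≤ 2 * |A| / (omg k - omg' k) := by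
      rw [le_div_iff₀ hw]
      nlinarith
    rw [hnB]
    linarith
  have hmabs : |(m : ℝ)| ≤ mB := by
    have : (m : ℝ) = ((t : ℝ × ℝ)).1 - n * omg k := by rw [h1]; ring
    rw [this, hmB]
    calc |((t : ℝ × ℝ)).1 - n * omg k| ≤ |((t : ℝ × ℝ)).1| + |(n : ℝ)| * |omg k| := by
          rw [← abs_mul]; exact abs_sub _ _
    _ ≤ |A| + nB * |omg k| + 1 := by
        have h5 : |(n : ℝ)| * |omg k| ≤ nB * |omg k| :=
          mul_le_mul_of_nonneg_right hnabs (abs_nonneg _)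
        linarith
  refine ⟨(m, n), ?_, ?_⟩
  · have hm1 : (m : ℝ) ≤ L := le_trans (le_trans (le_abs_self _) hmabs)
      (le_trans (Int.le_ceil mB) (by exact_mod_cast le_max_right ⌈nB⌉ ⌈mB⌉))
    have hm2 : -(L : ℝ) ≤ (m : ℝ) := by
      have := le_trans (neg_le_abs (m : ℝ)) (le_trans hmabs (le_trans (Int.le_ceil mB)
        (by exact_mod_cast le_max_right ⌈nB⌉ ⌈mB⌉ : (⌈mB⌉ : ℝ) ≤ L)))
      linarith [neg_abs_le (m : ℝ)]
    have hn1 : (n : ℝ) ≤ L := le_trans (le_trans (le_abs_self _) hnabs)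
      (le_trans (Int.le_ceil nB) (by exact_mod_cast le_max_left ⌈nB⌉ ⌈mB⌉))
    have hn2 : -(L : ℝ) ≤ (n : ℝ) := by
      have h6 : |(n : ℝ)| ≤ (L : ℝ) := le_trans hnabs (le_trans (Int.le_ceil nB)
        (by exact_mod_cast le_max_left ⌈nB⌉ ⌈mB⌉ : (⌈nB⌉ : ℝ) ≤ L))
      linarith [neg_abs_le (n : ℝ)]
    rw [Set.mem_Icc, Prod.mk_le_mk, Prod.mk_le_mk]
    refine ⟨⟨?_, ?_⟩, ⟨?_, ?_⟩⟩
    · exact_mod_cast hm2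
    · exact_mod_cast hn2
    · exact_mod_cast hm1
    · exact_mod_cast hn1
  · rw [Prod.ext_iff]
    exact ⟨h1.symm, h2.symm⟩

-- entries as real pairs
def aa (k : ℕ) (g : SL k) : ℝ × ℝ := (g.1 0 0 : ℝ × ℝ)
def bb (k : ℕ) (g : SL k) : ℝ × ℝ := (g.1 0 1 : ℝ × ℝ)
def cc (k : ℕ) (g : SL k) : ℝ × ℝ := (g.1 1 0 : ℝ × ℝ)
def dd (k : ℕ) (g : SL k) : ℝ × ℝ := (g.1 1 1 : ℝ × ℝ)

def den1 (k : ℕ) (g : SL k) (p : Pt) : ℝ :=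
  ((cc k g).1 * x1 p + (dd k g).1) ^ 2 + (cc k g).1 ^ 2 * y1 p ^ 2
def den2 (k : ℕ) (g : SL k) (p : Pt) : ℝ :=
  ((cc k g).2 * x2 p + (dd k g).2) ^ 2 + (cc k g).2 ^ 2 * y2 p ^ 2

lemma act_y1 (k : ℕ) (g : SL k) (p : Pt) : y1 (act k g p) = y1 p / den1 k g p := rfl
lemma act_y2 (k : ℕ) (g : SL k) (p : Pt) : y2 (act k g p) = y2 p / den2 k g p := rfl
lemma act_x1 (k : ℕ) (g : SL k) (p : Pt) : x1 (act k g p) =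
    (((aa k g).1 * x1 p + (bb k g).1) * ((cc k g).1 * x1 p + (dd k g).1)
      + (aa k g).1 * (cc k g).1 * y1 p ^ 2) / den1 k g p := rfl
lemma act_x2 (k : ℕ) (g : SL k) (p : Pt) : x2 (act k g p) =
    (((aa k g).2 * x2 p + (bb k g).2) * ((cc k g).2 * x2 p + (dd k g).2)
      + (aa k g).2 * (cc k g).2 * y2 p ^ 2) / den2 k g p := rfl

lemma det_comps (k : ℕ) (g : SL k) :
    (aa k g).1 * (dd k g).1 - (bb k g).1 * (cc k g).1 = 1 ∧
      (aa k g).2 * (dd k g).2 - (bb k g).2 * (cc k g).2 = 1 := by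
  have h := g.2
  rw [Matrix.det_fin_two] at h
  have h2 : ((g.1 0 0 * g.1 1 1 - g.1 0 1 * g.1 1 0 : R k) : ℝ × ℝ) = ((1 : R k) : ℝ × ℝ) := by
    rw [h]
  push_cast at h2
  unfold aa bb cc dd
  rw [Prod.ext_iff] at h2
  simp only [Prod.fst_sub, Prod.snd_sub, Prod.fst_mul, Prod.snd_mul, Prod.fst_one,
    Prod.snd_one] at h2
  exact h2

lemma den1_pos (k : ℕ) (g : SL k) (p : Pt) (hy : 0 < y1 p) : 0 < den1 k g p := by
  rcases eq_or_ne (cc k g).1 0 with hc | hc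
  · have hd : (dd k g).1 ≠ 0 := by
      intro hd
      have := (det_comps k g).1
      rw [hc, hd] at this
      norm_num at this
    unfold den1
    rw [hc]
    have : (0 : ℝ) < (dd k g).1 ^ 2 := by positivity
    nlinarith
  · unfold den1
    have h1 : (0 : ℝ) < (cc k g).1 ^ 2 * y1 p ^ 2 := by positivity
    nlinarith [sq_nonneg ((cc k g).1 * x1 p + (dd k g).1)]

lemma den2_pos (k : ℕ) (g : SL k) (p : Pt) (hy : 0 < y2 p) : 0 < den2 k g p := by
  rcases eq_or_ne (cc k g).2 0 with hc | hc
  · have hd : (dd k g).2 ≠ 0 := by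
      intro hd
      have := (det_comps k g).2
      rw [hc, hd] at this
      norm_num at this
    unfold den2
    rw [hc]
    have : (0 : ℝ) < (dd k g).2 ^ 2 := by positivity
    nlinarith
  · unfold den2
    have h1 : (0 : ℝ) < (cc k g).2 ^ 2 * y2 p ^ 2 := by positivity
    nlinarith [sq_nonneg ((cc k g).2 * x2 p + (dd k g).2)]

/-- key algebraic identity: the denominator of the inverse transformation. -/
lemma Dinv_eq (a b c d x y : ℝ) (hdet : a * d - b * c = 1)
    (hD : ((c * x + d) ^ 2 + c ^ 2 * y ^ 2) ≠ 0) :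
    ((-c * (((a * x + b) * (c * x + d) + a * c * y ^ 2) / ((c * x + d) ^ 2 + c ^ 2 * y ^ 2))
        + a) ^ 2
      + c ^ 2 * (y / ((c * x + d) ^ 2 + c ^ 2 * y ^ 2)) ^ 2)
      * ((c * x + d) ^ 2 + c ^ 2 * y ^ 2) = 1 := by
  obtain ⟨D, hDdef⟩ : ∃ D : ℝ, D = (c * x + d) ^ 2 + c ^ 2 * y ^ 2 := ⟨_, rfl⟩
  rw [← hDdef] at hD ⊢
  have h3 : -c * (((a * x + b) * (c * x + d) + a * c * y ^ 2) / D) + a = (c * x + d) / D := by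
    have key : ((a * x + b) * (c * x + d) + a * c * y ^ 2) / D * D
        = (a * x + b) * (c * x + d) + a * c * y ^ 2 := div_mul_cancel₀ _ hD
    rw [eq_div_iff hD]
    rw [hDdef] at key ⊢
    linear_combination (-c) * key + (c * x + d) * hdet
  rw [h3]
  have hstep : ((c * x + d) / D) ^ 2 * D + c ^ 2 * (y / D) ^ 2 * D
      = ((c * x + d) ^ 2 * D + c ^ 2 * y ^ 2 * D) / D ^ 2 := by ring
  have hnum : (c * x + d) ^ 2 * D + c ^ 2 * y ^ 2 * D = D ^ 2 := by rw [hDdef]; ring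
  rw [add_mul, hstep, hnum]
  exact div_self (pow_ne_zero 2 hD)

lemma row_mem_Spairs (k : ℕ) (g : SL k) : ((g.1 1 0, g.1 1 1) : R k × R k) ∈ Spairs k := by
  unfold Spairs
  rw [Set.mem_setOf_eq, Ideal.eq_top_iff_one, Ideal.mem_span_pair]
  refine ⟨-(g.1 0 1), g.1 0 0, ?_⟩
  have h := g.2
  rw [Matrix.det_fin_two] at h
  linear_combination h

lemma x1_eq (k : ℕ) (hk1 : 1 < k) (z : Pt) : x1 z = s1 k z + s2 k z * omg k := by
  have hne : omg k - omg' k ≠ 0 := ne_of_gt (omg_sub_pos hk1)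
  have hne' : omg' k - omg k ≠ 0 := by intro h; apply hne; linarith
  unfold s1 s2
  field_simp
  ring

lemma x2_eq (k : ℕ) (hk1 : 1 < k) (z : Pt) : x2 z = s1 k z + s2 k z * omg' k := by
  have hne : omg k - omg' k ≠ 0 := ne_of_gt (omg_sub_pos hk1)
  have hne' : omg' k - omg k ≠ 0 := by intro h; apply hne; linarith
  unfold s1 s2
  field_simp
  ring

lemma ball_coords {p q : Pt} {lam : ℝ} (h : q ∈ Metric.closedBall p lam) :
    |x1 q - x1 p| ≤ lam ∧ |x2 q - x2 p| ≤ lam ∧ |y1 q - y1 p| ≤ lam ∧ |y2 q - y2 p| ≤ lam := by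
  have hd : dist q p ≤ lam := Metric.mem_closedBall.mp h
  rw [Prod.dist_eq, max_le_iff] at hd
  obtain ⟨h1, hd⟩ := hd
  rw [Prod.dist_eq, max_le_iff] at hd
  obtain ⟨h2, hd⟩ := hd
  rw [Prod.dist_eq, max_le_iff] at hd
  obtain ⟨h3, h4⟩ := hd
  rw [Real.dist_eq] at h1 h2 h3 h4
  exact ⟨h1, h2, h3, h4⟩

/-- half of the smaller height of `p` -/
def eta (p : Pt) : ℝ := min (y1 p) (y2 p) / 2

lemma eta_pos {p : Pt} (hp : p ∈ HH) : 0 < eta p := by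
  have h1 : 0 < y1 p := hp.1
  have h2 : 0 < y2 p := hp.2
  unfold eta
  have : 0 < min (y1 p) (y2 p) := lt_min h1 h2
  linarith

lemma helper_sq_le {a b : ℝ} (ha : 0 ≤ a) (hb : 0 ≤ b) (h : a ^ 2 ≤ b ^ 2) : a ≤ b := by
  nlinarith

lemma helper_abs_sq {x : ℝ} (h : 1 ≤ |x|) : 1 ≤ x ^ 2 := by
  nlinarith [sq_abs x, abs_nonneg x]

lemma helper_abs_le_sqrt {x D : ℝ} (hD : 0 ≤ D) (h : x ^ 2 ≤ D) : |x| ≤ Real.sqrt D := by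
  have h1 : |x| ^ 2 ≤ Real.sqrt D ^ 2 := by
    rw [sq_abs, Real.sq_sqrt hD]; exact h
  exact helper_sq_le (abs_nonneg x) (Real.sqrt_nonneg D) h1

lemma Dinv_spec1 (k : ℕ) (g : SL k) (z : Pt) (hz1 : 0 < y1 z) :
    ((-(cc k g).1 * x1 (act k g z) + (aa k g).1) ^ 2
        + (cc k g).1 ^ 2 * (y1 (act k g z)) ^ 2) * den1 k g z = 1 :=
  Dinv_eq (aa k g).1 (bb k g).1 (cc k g).1 (dd k g).1 (x1 z) (y1 z) (det_comps k g).1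
    (ne_of_gt (den1_pos k g z hz1))

lemma Dinv_spec2 (k : ℕ) (g : SL k) (z : Pt) (hz2 : 0 < y2 z) :
    ((-(cc k g).2 * x2 (act k g z) + (aa k g).2) ^ 2
        + (cc k g).2 ^ 2 * (y2 (act k g z)) ^ 2) * den2 k g z = 1 :=
  Dinv_eq (aa k g).2 (bb k g).2 (cc k g).2 (dd k g).2 (x2 z) (y2 z) (det_comps k g).2
    (ne_of_gt (den2_pos k g z hz2))

/-- The master estimate: both the coordinates of `z` and the matrix entries of `g` are
bounded whenever `z ∈ F` and `g⋅z` lies in the small closed ball around `p`. -/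
lemma master_bounds {k : ℕ} (hk : Squarefree k) (hk1 : 1 < k) {ε : ℝ} (hε : 1 < ε)
    {p : Pt} (hp : p ∈ HH) :
    ∃ Bx my My A : ℝ, 0 < my ∧
      ∀ g : SL k, ∀ z ∈ F k ε, act k g z ∈ Metric.closedBall p (eta p) →
        (|x1 z| ≤ Bx ∧ |x2 z| ≤ Bx ∧ my ≤ y1 z ∧ y1 z ≤ My ∧ my ≤ y2 z ∧ y2 z ≤ My) ∧
        (|(aa k g).1| ≤ A ∧ |(aa k g).2| ≤ A ∧ |(bb k g).1| ≤ A ∧ |(bb k g).2| ≤ A ∧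
         |(cc k g).1| ≤ A ∧ |(cc k g).2| ≤ A ∧ |(dd k g).1| ≤ A ∧ |(dd k g).2| ≤ A) := by
  have hy1p : 0 < y1 p := hp.1
  have hy2p : 0 < y2 p := hp.2
  have hη : 0 < eta p := eta_pos hp
  have hε0 : 0 < ε := lt_trans one_pos hε
  obtain ⟨η, hηdef⟩ : ∃ x : ℝ, x = eta p := ⟨_, rfl⟩
  rw [← hηdef] at hη
  -- constants
  obtain ⟨My0, hMy0⟩ : ∃ x : ℝ, x = max (y1 p) (y2 p) + η := ⟨_, rfl⟩
  obtain ⟨X, hX⟩ : ∃ x : ℝ, x = max |x1 p| |x2 p| + η := ⟨_, rfl⟩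
  obtain ⟨Bx, hBx⟩ : ∃ x : ℝ, x = (1 + max |omg k| |omg' k|) / 2 := ⟨_, rfl⟩
  obtain ⟨Hup, hHup⟩ : ∃ x : ℝ, x = 1 / (η * η) + My0 * My0 := ⟨_, rfl⟩
  obtain ⟨My, hMy⟩ : ∃ x : ℝ, x = Real.sqrt Hup * ε := ⟨_, rfl⟩
  obtain ⟨my, hmy⟩ : ∃ x : ℝ, x = η / ε := ⟨_, rfl⟩
  obtain ⟨Dup, hDup⟩ : ∃ x : ℝ, x = My / η := ⟨_, rfl⟩
  obtain ⟨D'up, hD'up⟩ : ∃ x : ℝ, x = My0 / my := ⟨_, rfl⟩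
  obtain ⟨Ac, hAc⟩ : ∃ x : ℝ, x = Real.sqrt Dup / my := ⟨_, rfl⟩
  obtain ⟨Ad, hAd⟩ : ∃ x : ℝ, x = Real.sqrt Dup + Ac * Bx := ⟨_, rfl⟩
  obtain ⟨Aa, hAa⟩ : ∃ x : ℝ, x = Real.sqrt D'up + Ac * X := ⟨_, rfl⟩
  obtain ⟨Ab, hAb⟩ : ∃ x : ℝ, x = max ((Aa * Ad + 1) * Ac) (X * Ad + Aa * Bx) := ⟨_, rfl⟩
  have hMy0pos : 0 < My0 := by
    have : 0 < max (y1 p) (y2 p) := lt_max_of_lt_left hy1p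
    rw [hMy0]; linarith
  have hXpos : 0 < X := by
    have : (0:ℝ) ≤ max |x1 p| |x2 p| := le_max_of_le_left (abs_nonneg _)
    rw [hX]; linarith
  have hmypos : 0 < my := by rw [hmy]; exact div_pos hη hε0
  have hHuppos : 0 < Hup := by
    have h1 : 0 < 1 / (η * η) := by positivity
    have h2 : (0:ℝ) ≤ My0 * My0 := mul_self_nonneg _
    rw [hHup]; linarith
  have hMypos : 0 < My := by
    rw [hMy]; exact mul_pos (Real.sqrt_pos.mpr hHuppos) hε0
  have hDuppos : 0 < Dup := by rw [hDup]; exact div_pos hMypos hη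
  have hD'uppos : 0 < D'up := by rw [hD'up]; exact div_pos hMy0pos hmypos
  refine ⟨Bx, my, My, max (max Aa Ab) (max Ac Ad), hmypos, ?_⟩
  intro g z hz hball
  obtain ⟨⟨hzHH, hs1, hs2, hr1, hr2⟩, hzF0⟩ := hz
  have hy1z : 0 < y1 z := hzHH.1
  have hy2z : 0 < y2 z := hzHH.2
  -- coordinates of q = act g z
  set q := act k g z with hq
  obtain ⟨hbx1, hbx2, hby1, hby2⟩ := ball_coords hball
  rw [← hηdef] at hbx1 hbx2 hby1 hby2
  have hy1q_lb : η ≤ y1 q := by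
    have h2η : 2 * η ≤ y1 p := by
      rw [hηdef]; unfold eta; have := min_le_left (y1 p) (y2 p); linarith
    have := abs_le.mp hby1
    linarith [this.1]
  have hy2q_lb : η ≤ y2 q := by
    have h2η : 2 * η ≤ y2 p := by
      rw [hηdef]; unfold eta; have := min_le_right (y1 p) (y2 p); linarith
    have := abs_le.mp hby2
    linarith [this.1]
  have hy1q_ub : y1 q ≤ My0 := by
    have := abs_le.mp hby1
    have h1 : y1 p ≤ max (y1 p) (y2 p) := le_max_left _ _
    rw [hMy0]; linarith [this.2]
  have hy2q_ub : y2 q ≤ My0 := by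
    have := abs_le.mp hby2
    have h1 : y2 p ≤ max (y1 p) (y2 p) := le_max_right _ _
    rw [hMy0]; linarith [this.2]
  have hx1q : |x1 q| ≤ X := by
    have h1 : |x1 q| ≤ |x1 q - x1 p| + |x1 p| := by
      have := abs_add_le (x1 q - x1 p) (x1 p); simpa using this
    have h2 : |x1 p| ≤ max |x1 p| |x2 p| := le_max_left _ _
    rw [hX]; linarith
  have hx2q : |x2 q| ≤ X := by
    have h1 : |x2 q| ≤ |x2 q - x2 p| + |x2 p| := by
      have := abs_add_le (x2 q - x2 p) (x2 p); simpa using this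
    have h2 : |x2 p| ≤ max |x1 p| |x2 p| := le_max_right _ _
    rw [hX]; linarith
  have hy1qpos : 0 < y1 q := lt_of_lt_of_le hη hy1q_lb
  have hy2qpos : 0 < y2 q := lt_of_lt_of_le hη hy2q_lb
  -- denominators
  have hden1 : 0 < den1 k g z := den1_pos k g z hy1z
  have hden2 : 0 < den2 k g z := den2_pos k g z hy2z
  have hy1q_eq : y1 q = y1 z / den1 k g z := act_y1 k g z
  have hy2q_eq : y2 q = y2 z / den2 k g z := act_y2 k g z
  have hden1_eq : den1 k g z = y1 z / y1 q := by
    rw [hy1q_eq]; field_simp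
  have hden2_eq : den2 k g z = y2 z / y2 q := by
    rw [hy2q_eq]; field_simp
  -- norm of the bottom row is ≥ 1 on F
  have hnorm : 1 ≤ den1 k g z * den2 k g z := by
    have h := hzF0.2 (g.1 1 0, g.1 1 1) (row_mem_Spairs k g)
    exact h
  -- height identities
  have hhz_eq : y1 z * y2 z = (y1 q * y2 q) * (den1 k g z * den2 k g z) := by
    rw [hy1q_eq, hy2q_eq]; field_simp
  have hQ : η * η ≤ y1 q * y2 q :=
    mul_le_mul hy1q_lb hy2q_lb (le_of_lt hη) (le_of_lt hy1qpos)
  have hhz_lb : η * η ≤ y1 z * y2 z := by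
    rw [hhz_eq]
    calc η * η ≤ y1 q * y2 q := hQ
    _ ≤ (y1 q * y2 q) * (den1 k g z * den2 k g z) :=
        le_mul_of_one_le_right (le_of_lt (mul_pos hy1qpos hy2qpos)) hnorm
  -- upper bound for the height, by cases on c = 0
  have hhz_ub : y1 z * y2 z ≤ Hup := by
    rcases eq_or_ne (g.1 1 0) 0 with hc0 | hc0
    · -- c = 0 : norm of bottom-right is a unit
      have hcc : (cc k g) = (0, 0) := by
        unfold cc; rw [hc0]; rfl
      have hdet : g.1 0 0 * g.1 1 1 = 1 := by
        have h := g.2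
        rw [Matrix.det_fin_two] at h
        rw [hc0] at h
        linear_combination h
      have hnm : Nm k (g.1 1 1) * Nm k (g.1 0 0) = 1 := by
        rw [← nm_mul]
        rw [show g.1 1 1 * g.1 0 0 = 1 from by rw [mul_comm]; exact hdet]
        exact nm_one
      obtain ⟨j1, hj1⟩ := nm_int (g.1 1 1)
      obtain ⟨j2, hj2⟩ := nm_int (g.1 0 0)
      have hj : j1 * j2 = 1 := by
        have : ((j1 * j2 : ℤ) : ℝ) = ((1 : ℤ) : ℝ) := by
          push_cast
          rw [← hj1, ← hj2]
          linarith [hnm]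
        exact_mod_cast this
      have hj1sq : (Nm k (g.1 1 1)) ^ 2 = 1 := by
        have : j1 = 1 ∨ j1 = -1 := Int.isUnit_iff.mp (IsUnit.of_mul_eq_one _ hj)
        rw [hj1]
        rcases this with h | h <;> rw [h] <;> norm_num
      have hdd : (dd k g).1 * (dd k g).2 = Nm k (g.1 1 1) := rfl
      have hden_eq : den1 k g z * den2 k g z = 1 := by
        unfold den1 den2
        rw [hcc]
        simp only [Prod.fst, Prod.snd]
        have : ((0:ℝ) * x1 z + (dd k g).1) ^ 2 + (0:ℝ) ^ 2 * y1 z ^ 2 = (dd k g).1 ^ 2 := by ring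
        rw [this]
        have : ((0:ℝ) * x2 z + (dd k g).2) ^ 2 + (0:ℝ) ^ 2 * y2 z ^ 2 = (dd k g).2 ^ 2 := by ring
        rw [this]
        have : (dd k g).1 ^ 2 * (dd k g).2 ^ 2 = ((dd k g).1 * (dd k g).2) ^ 2 := by ring
        rw [this, hdd]
        exact hj1sq
      rw [hhz_eq, hden_eq, mul_one]
      have h1 : y1 q * y2 q ≤ My0 * My0 :=
        mul_le_mul hy1q_ub hy2q_ub (le_of_lt hy2qpos) (le_of_lt hMy0pos)
      rw [hHup]
      have : 0 < 1 / (η * η) := by positivity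
      linarith
    · -- c ≠ 0 : |Nm c| ≥ 1
      have hN := one_le_abs_nm hk hk1 hc0
      have hcc : (cc k g).1 * (cc k g).2 = Nm k (g.1 1 0) := rfl
      have hNsq : 1 ≤ ((cc k g).1 * (cc k g).2) ^ 2 := by
        rw [hcc]
        exact helper_abs_sq hN
      have hden_ge : (y1 z * y2 z) ^ 2 ≤ den1 k g z * den2 k g z := by
        have h1 : (cc k g).1 ^ 2 * y1 z ^ 2 ≤ den1 k g z :=
          le_add_of_nonneg_left (sq_nonneg _)
        have h2 : (cc k g).2 ^ 2 * y2 z ^ 2 ≤ den2 k g z :=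
          le_add_of_nonneg_left (sq_nonneg _)
        calc (y1 z * y2 z) ^ 2 ≤ ((cc k g).1 * (cc k g).2) ^ 2 * (y1 z * y2 z) ^ 2 :=
              le_mul_of_one_le_left (sq_nonneg _) hNsq
          _ = ((cc k g).1 ^ 2 * y1 z ^ 2) * ((cc k g).2 ^ 2 * y2 z ^ 2) := by ring
          _ ≤ den1 k g z * den2 k g z := by
              apply mul_le_mul h1 h2 (by positivity) (le_of_lt hden1)
      -- y1z*y2z ≤ 1/(y1q*y2q) ≤ 1/(η*η)
      have hDpos : 0 < den1 k g z * den2 k g z := mul_pos hden1 hden2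
      have hkey : (y1 z * y2 z) * (y1 q * y2 q) ≤ 1 := by
        have hc2 : ((y1 z * y2 z) * (y1 q * y2 q)) * (den1 k g z * den2 k g z)
            ≤ 1 * (den1 k g z * den2 k g z) := by
          have : (y1 z * y2 z) * ((y1 q * y2 q) * (den1 k g z * den2 k g z))
              = (y1 z * y2 z) * (y1 z * y2 z) := by rw [← hhz_eq]
          calc ((y1 z * y2 z) * (y1 q * y2 q)) * (den1 k g z * den2 k g z)
              = (y1 z * y2 z) * ((y1 q * y2 q) * (den1 k g z * den2 k g z)) := by ring
          _ = (y1 z * y2 z) * (y1 z * y2 z) := this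
          _ = (y1 z * y2 z) ^ 2 := by ring
          _ ≤ den1 k g z * den2 k g z := hden_ge
          _ = 1 * (den1 k g z * den2 k g z) := by ring
        exact le_of_mul_le_mul_right hc2 hDpos
      have h2 : y1 z * y2 z ≤ 1 / (η * η) := by
        rw [le_div_iff₀ (mul_pos hη hη)]
        calc (y1 z * y2 z) * (η * η) ≤ (y1 z * y2 z) * (y1 q * y2 q) :=
            mul_le_mul_of_nonneg_left hQ (le_of_lt (mul_pos hy1z hy2z))
        _ ≤ 1 := hkey
      rw [hHup]
      have := mul_self_nonneg My0
      linarith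
  -- y bounds for z
  have hrrpos : 0 < rr z := div_pos hy1z hy2z
  have hy1z_sq : y1 z ^ 2 = (y1 z * y2 z) * rr z := by
    unfold rr; field_simp
  have hy2z_sq : y2 z ^ 2 * rr z = y1 z * y2 z := by
    unfold rr; field_simp
  have hMysq : My ^ 2 = Hup * ε ^ 2 := by
    rw [hMy, mul_pow, Real.sq_sqrt (le_of_lt hHuppos)]
  have hmysq : my ^ 2 = (η * η) / ε ^ 2 := by
    rw [hmy]; field_simp
  have hεsqpos : 0 < ε ^ 2 := by positivity
  have hHup_nonneg : 0 ≤ Hup := le_of_lt hHuppos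
  have hPpos : 0 < y1 z * y2 z := mul_pos hy1z hy2z
  have hrinv_ub : (rr z)⁻¹ ≤ ε ^ 2 := by
    rw [← inv_inv (ε ^ 2)]
    exact inv_anti₀ (inv_pos.mpr hεsqpos) hr1
  have hrinv_lb : (ε ^ 2)⁻¹ ≤ (rr z)⁻¹ := by
    exact inv_anti₀ hrrpos hr2
  have hy2z_sq' : y2 z ^ 2 = (y1 z * y2 z) * (rr z)⁻¹ := by
    unfold rr
    field_simp
  have hy1z_ub : y1 z ≤ My := by
    have h1 : y1 z ^ 2 ≤ Hup * ε ^ 2 := by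
      rw [hy1z_sq]
      exact mul_le_mul hhz_ub hr2 (le_of_lt hrrpos) hHup_nonneg
    apply helper_sq_le (le_of_lt hy1z) (le_of_lt hMypos)
    rw [hMysq]
    exact h1
  have hy1z_lb : my ≤ y1 z := by
    apply helper_sq_le (le_of_lt hmypos) (le_of_lt hy1z)
    rw [hmysq, hy1z_sq, div_eq_mul_inv]
    exact mul_le_mul hhz_lb hr1 (le_of_lt (inv_pos.mpr hεsqpos)) (le_of_lt hPpos)
  have hy2z_ub : y2 z ≤ My := by
    have h1 : y2 z ^ 2 ≤ Hup * ε ^ 2 := by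
      rw [hy2z_sq']
      exact mul_le_mul hhz_ub hrinv_ub (le_of_lt (inv_pos.mpr hrrpos)) hHup_nonneg
    apply helper_sq_le (le_of_lt hy2z) (le_of_lt hMypos)
    rw [hMysq]
    exact h1
  have hy2z_lb : my ≤ y2 z := by
    apply helper_sq_le (le_of_lt hmypos) (le_of_lt hy2z)
    rw [hmysq, hy2z_sq', div_eq_mul_inv]
    exact mul_le_mul hhz_lb hrinv_lb (le_of_lt (inv_pos.mpr hεsqpos)) (le_of_lt hPpos)
  -- x bounds for z
  have hx1z : |x1 z| ≤ Bx := by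
    rw [x1_eq k hk1 z, hBx]
    have h1 : |s1 k z + s2 k z * omg k| ≤ |s1 k z| + |s2 k z| * |omg k| := by
      calc |s1 k z + s2 k z * omg k| ≤ |s1 k z| + |s2 k z * omg k| := abs_add_le _ _
      _ = |s1 k z| + |s2 k z| * |omg k| := by rw [abs_mul]
    have h2 : |omg k| ≤ max |omg k| |omg' k| := le_max_left _ _
    have h3 : |s2 k z| * |omg k| ≤ (1/2) * max |omg k| |omg' k| := by
      apply mul_le_mul hs2 h2 (abs_nonneg _)
      have : (0:ℝ) ≤ |omg k| := abs_nonneg _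
      have h4 : (0:ℝ) ≤ max |omg k| |omg' k| := le_max_of_le_left this
      linarith
    linarith
  have hx2z : |x2 z| ≤ Bx := by
    rw [x2_eq k hk1 z, hBx]
    have h1 : |s1 k z + s2 k z * omg' k| ≤ |s1 k z| + |s2 k z| * |omg' k| := by
      calc |s1 k z + s2 k z * omg' k| ≤ |s1 k z| + |s2 k z * omg' k| := abs_add_le _ _
      _ = |s1 k z| + |s2 k z| * |omg' k| := by rw [abs_mul]
    have h2 : |omg' k| ≤ max |omg k| |omg' k| := le_max_right _ _
    have h3 : |s2 k z| * |omg' k| ≤ (1/2) * max |omg k| |omg' k| := by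
      apply mul_le_mul hs2 h2 (abs_nonneg _)
      have : (0:ℝ) ≤ |omg k| := abs_nonneg _
      have h4 : (0:ℝ) ≤ max |omg k| |omg' k| := le_max_of_le_left this
      linarith
    linarith
  refine ⟨⟨hx1z, hx2z, hy1z_lb, hy1z_ub, hy2z_lb, hy2z_ub⟩, ?_⟩

  -- nonnegativity of the constants
  have hBxnn : 0 ≤ Bx := by
    rw [hBx]
    have : (0:ℝ) ≤ max |omg k| |omg' k| := le_max_of_le_left (abs_nonneg _)
    linarith
  have hAcnn : 0 ≤ Ac := by rw [hAc]; exact div_nonneg (Real.sqrt_nonneg _) (le_of_lt hmypos)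
  have hAdnn : 0 ≤ Ad := by
    rw [hAd]; exact add_nonneg (Real.sqrt_nonneg _) (mul_nonneg hAcnn hBxnn)
  have hAann : 0 ≤ Aa := by
    rw [hAa]; exact add_nonneg (Real.sqrt_nonneg _) (mul_nonneg hAcnn (le_of_lt hXpos))
  -- upper bounds for the denominators
  have hden1_ub : den1 k g z ≤ Dup := by
    rw [hden1_eq, hDup]
    exact div_le_div₀ (le_of_lt hMypos) hy1z_ub hη hy1q_lb
  have hden2_ub : den2 k g z ≤ Dup := by
    rw [hden2_eq, hDup]
    exact div_le_div₀ (le_of_lt hMypos) hy2z_ub hη hy2q_lb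
  -- c bounds
  have hc1 : |(cc k g).1| ≤ Ac := by
    have hsq : ((cc k g).1 * y1 z) ^ 2 ≤ Dup := by
      calc ((cc k g).1 * y1 z) ^ 2 = (cc k g).1 ^ 2 * y1 z ^ 2 := by ring
      _ ≤ den1 k g z := le_add_of_nonneg_left (sq_nonneg _)
      _ ≤ Dup := hden1_ub
    have habs : |(cc k g).1| * y1 z ≤ Real.sqrt Dup := by
      have := helper_abs_le_sqrt (le_of_lt hDuppos) hsq
      rwa [abs_mul, abs_of_pos hy1z] at this
    rw [hAc, le_div_iff₀ hmypos]
    calc |(cc k g).1| * my ≤ |(cc k g).1| * y1 z :=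
        mul_le_mul_of_nonneg_left hy1z_lb (abs_nonneg _)
    _ ≤ Real.sqrt Dup := habs
  have hc2 : |(cc k g).2| ≤ Ac := by
    have hsq : ((cc k g).2 * y2 z) ^ 2 ≤ Dup := by
      calc ((cc k g).2 * y2 z) ^ 2 = (cc k g).2 ^ 2 * y2 z ^ 2 := by ring
      _ ≤ den2 k g z := le_add_of_nonneg_left (sq_nonneg _)
      _ ≤ Dup := hden2_ub
    have habs : |(cc k g).2| * y2 z ≤ Real.sqrt Dup := by
      have := helper_abs_le_sqrt (le_of_lt hDuppos) hsq
      rwa [abs_mul, abs_of_pos hy2z] at this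
    rw [hAc, le_div_iff₀ hmypos]
    calc |(cc k g).2| * my ≤ |(cc k g).2| * y2 z :=
        mul_le_mul_of_nonneg_left hy2z_lb (abs_nonneg _)
    _ ≤ Real.sqrt Dup := habs
  -- d bounds
  have hd1 : |(dd k g).1| ≤ Ad := by
    have hsq : ((cc k g).1 * x1 z + (dd k g).1) ^ 2 ≤ Dup := by
      calc ((cc k g).1 * x1 z + (dd k g).1) ^ 2 ≤ den1 k g z :=
          le_add_of_nonneg_right (by positivity)
      _ ≤ Dup := hden1_ub
    have habs := helper_abs_le_sqrt (le_of_lt hDuppos) hsq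
    have htri : |(dd k g).1| ≤ |(cc k g).1 * x1 z + (dd k g).1| + |(cc k g).1| * |x1 z| := by
      have h0 : (dd k g).1 = ((cc k g).1 * x1 z + (dd k g).1) - (cc k g).1 * x1 z := by ring
      calc |(dd k g).1| = |((cc k g).1 * x1 z + (dd k g).1) - (cc k g).1 * x1 z| := by rw [← h0]
      _ ≤ |(cc k g).1 * x1 z + (dd k g).1| + |(cc k g).1 * x1 z| := abs_sub _ _
      _ = |(cc k g).1 * x1 z + (dd k g).1| + |(cc k g).1| * |x1 z| := by rw [abs_mul]
    have hcx : |(cc k g).1| * |x1 z| ≤ Ac * Bx :=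
      mul_le_mul hc1 hx1z (abs_nonneg _) hAcnn
    rw [hAd]
    linarith
  have hd2 : |(dd k g).2| ≤ Ad := by
    have hsq : ((cc k g).2 * x2 z + (dd k g).2) ^ 2 ≤ Dup := by
      calc ((cc k g).2 * x2 z + (dd k g).2) ^ 2 ≤ den2 k g z :=
          le_add_of_nonneg_right (by positivity)
      _ ≤ Dup := hden2_ub
    have habs := helper_abs_le_sqrt (le_of_lt hDuppos) hsq
    have htri : |(dd k g).2| ≤ |(cc k g).2 * x2 z + (dd k g).2| + |(cc k g).2| * |x2 z| := by
      have h0 : (dd k g).2 = ((cc k g).2 * x2 z + (dd k g).2) - (cc k g).2 * x2 z := by ring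
      calc |(dd k g).2| = |((cc k g).2 * x2 z + (dd k g).2) - (cc k g).2 * x2 z| := by rw [← h0]
      _ ≤ |(cc k g).2 * x2 z + (dd k g).2| + |(cc k g).2 * x2 z| := abs_sub _ _
      _ = |(cc k g).2 * x2 z + (dd k g).2| + |(cc k g).2| * |x2 z| := by rw [abs_mul]
    have hcx : |(cc k g).2| * |x2 z| ≤ Ac * Bx :=
      mul_le_mul hc2 hx2z (abs_nonneg _) hAcnn
    rw [hAd]
    linarith
  -- a bounds via the inverse-denominator identity
  have hE1 : (-(cc k g).1 * x1 q + (aa k g).1) ^ 2 + (cc k g).1 ^ 2 * (y1 q) ^ 2 ≤ D'up := by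
    have hDinv := Dinv_spec1 k g z hy1z
    have hEeq : (-(cc k g).1 * x1 q + (aa k g).1) ^ 2 + (cc k g).1 ^ 2 * (y1 q) ^ 2
        = 1 / den1 k g z := by
      rw [eq_div_iff (ne_of_gt hden1)]
      exact hDinv
    have h1d : 1 / den1 k g z = y1 q / y1 z := by
      rw [hy1q_eq]
      field_simp
    rw [hEeq, h1d, hD'up]
    exact div_le_div₀ (le_of_lt hMy0pos) hy1q_ub hmypos hy1z_lb
  have hE2 : (-(cc k g).2 * x2 q + (aa k g).2) ^ 2 + (cc k g).2 ^ 2 * (y2 q) ^ 2 ≤ D'up := by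
    have hDinv := Dinv_spec2 k g z hy2z
    have hEeq : (-(cc k g).2 * x2 q + (aa k g).2) ^ 2 + (cc k g).2 ^ 2 * (y2 q) ^ 2
        = 1 / den2 k g z := by
      rw [eq_div_iff (ne_of_gt hden2)]
      exact hDinv
    have h1d : 1 / den2 k g z = y2 q / y2 z := by
      rw [hy2q_eq]
      field_simp
    rw [hEeq, h1d, hD'up]
    exact div_le_div₀ (le_of_lt hMy0pos) hy2q_ub hmypos hy2z_lb
  have ha1 : |(aa k g).1| ≤ Aa := by
    have hsq : (-(cc k g).1 * x1 q + (aa k g).1) ^ 2 ≤ D'up :=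
      le_trans (le_add_of_nonneg_right (by positivity)) hE1
    have habs := helper_abs_le_sqrt (le_of_lt hD'uppos) hsq
    have htri : |(aa k g).1| ≤ |-(cc k g).1 * x1 q + (aa k g).1| + |(cc k g).1| * |x1 q| := by
      have h0 : (aa k g).1 = (-(cc k g).1 * x1 q + (aa k g).1) - (-(cc k g).1) * x1 q := by ring
      calc |(aa k g).1| = |(-(cc k g).1 * x1 q + (aa k g).1) - (-(cc k g).1) * x1 q| := by
            rw [← h0]
      _ ≤ |-(cc k g).1 * x1 q + (aa k g).1| + |(-(cc k g).1) * x1 q| := abs_sub _ _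
      _ = |-(cc k g).1 * x1 q + (aa k g).1| + |(cc k g).1| * |x1 q| := by
            rw [abs_mul, abs_neg]
    have hcx : |(cc k g).1| * |x1 q| ≤ Ac * X :=
      mul_le_mul hc1 hx1q (abs_nonneg _) hAcnn
    rw [hAa]
    linarith
  have ha2 : |(aa k g).2| ≤ Aa := by
    have hsq : (-(cc k g).2 * x2 q + (aa k g).2) ^ 2 ≤ D'up :=
      le_trans (le_add_of_nonneg_right (by positivity)) hE2
    have habs := helper_abs_le_sqrt (le_of_lt hD'uppos) hsq
    have htri : |(aa k g).2| ≤ |-(cc k g).2 * x2 q + (aa k g).2| + |(cc k g).2| * |x2 q| := by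
      have h0 : (aa k g).2 = (-(cc k g).2 * x2 q + (aa k g).2) - (-(cc k g).2) * x2 q := by ring
      calc |(aa k g).2| = |(-(cc k g).2 * x2 q + (aa k g).2) - (-(cc k g).2) * x2 q| := by
            rw [← h0]
      _ ≤ |-(cc k g).2 * x2 q + (aa k g).2| + |(-(cc k g).2) * x2 q| := abs_sub _ _
      _ = |-(cc k g).2 * x2 q + (aa k g).2| + |(cc k g).2| * |x2 q| := by
            rw [abs_mul, abs_neg]
    have hcx : |(cc k g).2| * |x2 q| ≤ Ac * X :=
      mul_le_mul hc2 hx2q (abs_nonneg _) hAcnn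
    rw [hAa]
    linarith
  -- b bounds
  have had1 : |(aa k g).1| * |(dd k g).1| ≤ Aa * Ad :=
    mul_le_mul ha1 hd1 (abs_nonneg _) hAann
  have had2 : |(aa k g).2| * |(dd k g).2| ≤ Aa * Ad :=
    mul_le_mul ha2 hd2 (abs_nonneg _) hAann
  have hb1 : |(bb k g).1| ≤ Ab := by
    rcases eq_or_ne (g.1 1 0) 0 with hc0 | hc0
    · -- c = 0
      have hcz : (cc k g).1 = 0 := by unfold cc; rw [hc0]; rfl
      have hdet := (det_comps k g).1
      rw [hcz] at hdet
      have had : (aa k g).1 * (dd k g).1 = 1 := by linarith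
      have hdne : (dd k g).1 ≠ 0 := by
        intro h
        rw [h] at had
        norm_num at had
      have hdeneq : den1 k g z = (dd k g).1 ^ 2 := by
        unfold den1
        rw [hcz]
        ring
      have hxq := act_x1 k g z
      rw [hcz, hdeneq] at hxq
      have hb1eq : (bb k g).1 = x1 q * (dd k g).1 - (aa k g).1 * x1 z := by
        have h6 : x1 q * (dd k g).1 ^ 2
            = ((aa k g).1 * x1 z + (bb k g).1) * (dd k g).1 := by
          rw [hxq, div_mul_cancel₀ _ (pow_ne_zero 2 hdne)]
          ring
        have h7 : x1 q * (dd k g).1 = (aa k g).1 * x1 z + (bb k g).1 :=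
          mul_right_cancel₀ hdne (by linear_combination h6)
        linarith [h7]
      rw [hb1eq]
      have : |x1 q * (dd k g).1 - (aa k g).1 * x1 z|
          ≤ |x1 q| * |(dd k g).1| + |(aa k g).1| * |x1 z| := by
        calc |x1 q * (dd k g).1 - (aa k g).1 * x1 z|
            ≤ |x1 q * (dd k g).1| + |(aa k g).1 * x1 z| := abs_sub _ _
        _ = |x1 q| * |(dd k g).1| + |(aa k g).1| * |x1 z| := by rw [abs_mul, abs_mul]
      have h8 : |x1 q| * |(dd k g).1| ≤ X * Ad :=
        mul_le_mul hx1q hd1 (abs_nonneg _) (le_of_lt hXpos)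
      have h9 : |(aa k g).1| * |x1 z| ≤ Aa * Bx :=
        mul_le_mul ha1 hx1z (abs_nonneg _) hAann
      rw [hAb]
      have := le_max_right ((Aa * Ad + 1) * Ac) (X * Ad + Aa * Bx)
      linarith
    · -- c ≠ 0
      have hN := one_le_abs_nm hk hk1 hc0
      have hNmc : Nm k (g.1 1 0) = (cc k g).1 * (cc k g).2 := rfl
      have h1c : 1 ≤ |(cc k g).1| * |(cc k g).2| := by
        rw [← abs_mul, ← hNmc]
        exact hN
      have hbc : (bb k g).1 * (cc k g).1 = (aa k g).1 * (dd k g).1 - 1 := by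
        linear_combination (-1 : ℝ) * (det_comps k g).1
      have hbcabs : |(bb k g).1| * |(cc k g).1| ≤ Aa * Ad + 1 := by
        rw [← abs_mul, hbc]
        calc |(aa k g).1 * (dd k g).1 - 1|
            ≤ |(aa k g).1 * (dd k g).1| + |(1:ℝ)| := abs_sub _ _
        _ = |(aa k g).1| * |(dd k g).1| + 1 := by rw [abs_mul, abs_one]
        _ ≤ Aa * Ad + 1 := by linarith
      have hfin : |(bb k g).1| ≤ (Aa * Ad + 1) * Ac := by
        calc |(bb k g).1| ≤ |(bb k g).1| * (|(cc k g).1| * |(cc k g).2|) :=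
            le_mul_of_one_le_right (abs_nonneg _) h1c
        _ = (|(bb k g).1| * |(cc k g).1|) * |(cc k g).2| := by ring
        _ ≤ (Aa * Ad + 1) * Ac := by
            apply mul_le_mul hbcabs hc2 (abs_nonneg _)
            have : (0:ℝ) ≤ Aa * Ad := mul_nonneg hAann hAdnn
            linarith
      rw [hAb]
      exact le_trans hfin (le_max_left _ _)
  have hb2 : |(bb k g).2| ≤ Ab := by
    rcases eq_or_ne (g.1 1 0) 0 with hc0 | hc0
    · have hcz : (cc k g).2 = 0 := by unfold cc; rw [hc0]; rfl
      have hdet := (det_comps k g).2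
      rw [hcz] at hdet
      have had : (aa k g).2 * (dd k g).2 = 1 := by linarith
      have hdne : (dd k g).2 ≠ 0 := by
        intro h
        rw [h] at had
        norm_num at had
      have hdeneq : den2 k g z = (dd k g).2 ^ 2 := by
        unfold den2
        rw [hcz]
        ring
      have hxq := act_x2 k g z
      rw [hcz, hdeneq] at hxq
      have hb2eq : (bb k g).2 = x2 q * (dd k g).2 - (aa k g).2 * x2 z := by
        have h6 : x2 q * (dd k g).2 ^ 2
            = ((aa k g).2 * x2 z + (bb k g).2) * (dd k g).2 := by
          rw [hxq, div_mul_cancel₀ _ (pow_ne_zero 2 hdne)]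
          ring
        have h7 : x2 q * (dd k g).2 = (aa k g).2 * x2 z + (bb k g).2 :=
          mul_right_cancel₀ hdne (by linear_combination h6)
        linarith [h7]
      rw [hb2eq]
      have : |x2 q * (dd k g).2 - (aa k g).2 * x2 z|
          ≤ |x2 q| * |(dd k g).2| + |(aa k g).2| * |x2 z| := by
        calc |x2 q * (dd k g).2 - (aa k g).2 * x2 z|
            ≤ |x2 q * (dd k g).2| + |(aa k g).2 * x2 z| := abs_sub _ _
        _ = |x2 q| * |(dd k g).2| + |(aa k g).2| * |x2 z| := by rw [abs_mul, abs_mul]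
      have h8 : |x2 q| * |(dd k g).2| ≤ X * Ad :=
        mul_le_mul hx2q hd2 (abs_nonneg _) (le_of_lt hXpos)
      have h9 : |(aa k g).2| * |x2 z| ≤ Aa * Bx :=
        mul_le_mul ha2 hx2z (abs_nonneg _) hAann
      rw [hAb]
      have := le_max_right ((Aa * Ad + 1) * Ac) (X * Ad + Aa * Bx)
      linarith
    · have hN := one_le_abs_nm hk hk1 hc0
      have hNmc : Nm k (g.1 1 0) = (cc k g).1 * (cc k g).2 := rfl
      have h1c : 1 ≤ |(cc k g).1| * |(cc k g).2| := by
        rw [← abs_mul, ← hNmc]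
        exact hN
      have hbc : (bb k g).2 * (cc k g).2 = (aa k g).2 * (dd k g).2 - 1 := by
        linear_combination (-1 : ℝ) * (det_comps k g).2
      have hbcabs : |(bb k g).2| * |(cc k g).2| ≤ Aa * Ad + 1 := by
        rw [← abs_mul, hbc]
        calc |(aa k g).2 * (dd k g).2 - 1|
            ≤ |(aa k g).2 * (dd k g).2| + |(1:ℝ)| := abs_sub _ _
        _ = |(aa k g).2| * |(dd k g).2| + 1 := by rw [abs_mul, abs_one]
        _ ≤ Aa * Ad + 1 := by linarith
      have hfin : |(bb k g).2| ≤ (Aa * Ad + 1) * Ac := by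
        calc |(bb k g).2| ≤ |(bb k g).2| * (|(cc k g).1| * |(cc k g).2|) :=
            le_mul_of_one_le_right (abs_nonneg _) h1c
        _ = (|(bb k g).2| * |(cc k g).2|) * |(cc k g).1| := by ring
        _ ≤ (Aa * Ad + 1) * Ac := by
            apply mul_le_mul hbcabs hc1 (abs_nonneg _)
            have : (0:ℝ) ≤ Aa * Ad := mul_nonneg hAann hAdnn
            linarith
      rw [hAb]
      exact le_trans hfin (le_max_left _ _)
  -- assemble
  have hup1 : Aa ≤ max (max Aa Ab) (max Ac Ad) := le_trans (le_max_left _ _) (le_max_left _ _)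
  have hup2 : Ab ≤ max (max Aa Ab) (max Ac Ad) := le_trans (le_max_right _ _) (le_max_left _ _)
  have hup3 : Ac ≤ max (max Aa Ab) (max Ac Ad) := le_trans (le_max_left _ _) (le_max_right _ _)
  have hup4 : Ad ≤ max (max Aa Ab) (max Ac Ad) := le_trans (le_max_right _ _) (le_max_right _ _)
  exact ⟨le_trans ha1 hup1, le_trans ha2 hup1, le_trans hb1 hup2, le_trans hb2 hup2,
    le_trans hc1 hup3, le_trans hc2 hup3, le_trans hd1 hup4, le_trans hd2 hup4⟩


-- continuity lemmas
lemma cont_x1 : Continuous x1 := continuous_fst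
lemma cont_x2 : Continuous x2 := by unfold x2; fun_prop
lemma cont_y1 : Continuous y1 := by unfold y1; fun_prop
lemma cont_y2 : Continuous y2 := by unfold y2; fun_prop
lemma cont_s1 (k : ℕ) : Continuous (s1 k) := by unfold s1 x1 x2; fun_prop
lemma cont_s2 (k : ℕ) : Continuous (s2 k) := by unfold s2 x1 x2; fun_prop
lemma cont_HNorm (c d : ℝ × ℝ) : Continuous (HNorm c d) := by
  unfold HNorm x1 x2 y1 y2; fun_prop

lemma act_contAt (k : ℕ) (g : SL k) {z : Pt} (hz : z ∈ HH) :
    ContinuousAt (act k g) z := by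
  have h1 : den1 k g z ≠ 0 := ne_of_gt (den1_pos k g z hz.1)
  have h2 : den2 k g z ≠ 0 := ne_of_gt (den2_pos k g z hz.2)
  unfold den1 cc dd x1 y1 at h1
  unfold den2 cc dd x2 y2 at h2
  unfold act moeb x1 x2 y1 y2
  refine ContinuousAt.prodMk
    (ContinuousAt.div₀ (a := z) ?_ ?_ h1)
    (ContinuousAt.prodMk
      (ContinuousAt.div₀ (a := z) ?_ ?_ h2)
      (ContinuousAt.prodMk
        (ContinuousAt.div₀ (a := z) ?_ ?_ h1)
        (ContinuousAt.div₀ (a := z) ?_ ?_ h2)))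
  all_goals fun_prop

lemma mem_box {z : Pt} {Bx my My : ℝ}
    (h1 : |x1 z| ≤ Bx) (h2 : |x2 z| ≤ Bx) (h3 : my ≤ y1 z) (h4 : y1 z ≤ My)
    (h5 : my ≤ y2 z) (h6 : y2 z ≤ My) :
    z ∈ Set.Icc ((-Bx, -Bx, my, my) : Pt) ((Bx, Bx, My, My) : Pt) := by
  have a1 := abs_le.mp h1
  have a2 := abs_le.mp h2
  exact ⟨⟨a1.1, a2.1, h3, h5⟩, ⟨a1.2, a2.2, h4, h6⟩⟩

/-- Points of `F` mapped into the small ball stay in a fixed compact box. -/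
lemma G_finite {k : ℕ} (hk : Squarefree k) (hk1 : 1 < k) {ε : ℝ} (hε : 1 < ε)
    {p : Pt} (hp : p ∈ HH) :
    {g : SL k | ∃ z ∈ F k ε, act k g z ∈ Metric.closedBall p (eta p)}.Finite := by
  obtain ⟨Bx, my, My, A, hmy, hmaster⟩ := master_bounds hk hk1 hε hp
  have hbox := box_finite (k := k) hk1 A
  apply Set.Finite.of_finite_image
    (f := fun g : SL k => (g.1 0 0, g.1 0 1, g.1 1 0, g.1 1 1))
  · apply Set.Finite.subset (hbox.prod (hbox.prod (hbox.prod hbox)))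
    rintro x ⟨g, hg, rfl⟩
    obtain ⟨z, hz, hball⟩ := hg
    obtain ⟨-, ha1, ha2, hb1, hb2, hc1, hc2, hd1, hd2⟩ := hmaster g z hz hball
    exact ⟨⟨ha1, ha2⟩, ⟨hb1, hb2⟩, ⟨hc1, hc2⟩, ⟨hd1, hd2⟩⟩
  · intro g1 _ g2 _ h
    simp only [Prod.ext_iff] at h
    apply Subtype.ext
    apply Matrix.ext
    intro i j
    fin_cases i <;> fin_cases j
    · exact h.1
    · exact h.2.1
    · exact h.2.2.1
    · exact h.2.2.2

lemma F_closed_limit {k : ℕ} {ε : ℝ} {w : ℕ → Pt} {z : Pt}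
    (hw : Filter.Tendsto w Filter.atTop (nhds z)) (hwF : ∀ n, w n ∈ F k ε)
    (hzHH : z ∈ HH) : z ∈ F k ε := by
  have hy2ne : y2 z ≠ 0 := ne_of_gt hzHH.2
  have htx1 : Filter.Tendsto (fun n => y1 (w n)) Filter.atTop (nhds (y1 z)) :=
    (cont_y1.continuousAt.tendsto).comp hw
  have htx2 : Filter.Tendsto (fun n => y2 (w n)) Filter.atTop (nhds (y2 z)) :=
    (cont_y2.continuousAt.tendsto).comp hw
  have htrr : Filter.Tendsto (fun n => rr (w n)) Filter.atTop (nhds (rr z)) := by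
    unfold rr
    exact Filter.Tendsto.div htx1 htx2 hy2ne
  refine ⟨⟨hzHH, ?_, ?_, ?_, ?_⟩, hzHH, ?_⟩
  · -- |s1| ≤ 1/2
    have ht : Filter.Tendsto (fun n => |s1 k (w n)|) Filter.atTop (nhds (|s1 k z|)) :=
      ((continuous_abs.comp (cont_s1 k)).continuousAt.tendsto).comp hw
    exact le_of_tendsto ht (Filter.Eventually.of_forall fun n => (hwF n).1.2.1)
  · have ht : Filter.Tendsto (fun n => |s2 k (w n)|) Filter.atTop (nhds (|s2 k z|)) :=
      ((continuous_abs.comp (cont_s2 k)).continuousAt.tendsto).comp hw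
    exact le_of_tendsto ht (Filter.Eventually.of_forall fun n => (hwF n).1.2.2.1)
  · exact ge_of_tendsto htrr (Filter.Eventually.of_forall fun n => (hwF n).1.2.2.2.1)
  · exact le_of_tendsto htrr (Filter.Eventually.of_forall fun n => (hwF n).1.2.2.2.2)
  · intro cd hcd
    have ht : Filter.Tendsto (fun n => HNorm (cd.1 : ℝ × ℝ) (cd.2 : ℝ × ℝ) (w n))
        Filter.atTop (nhds (HNorm (cd.1 : ℝ × ℝ) (cd.2 : ℝ × ℝ) z)) :=
      ((cont_HNorm _ _).continuousAt.tendsto).comp hw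
    exact ge_of_tendsto ht (Filter.Eventually.of_forall fun n => (hwF n).2.2 cd hcd)

lemma avoid_radius {k : ℕ} (hk : Squarefree k) (hk1 : 1 < k) {ε : ℝ} (hε : 1 < ε)
    {p : Pt} (hp : p ∈ HH) (g : SL k) (hgp : p ∉ act k g '' F k ε) :
    ∃ δ > 0, δ ≤ eta p ∧ ∀ q ∈ Metric.ball p δ, q ∉ act k g '' F k ε := by
  by_contra hcon
  push_neg at hcon
  have hη := eta_pos hp
  have hex : ∀ n : ℕ, ∃ q, q ∈ Metric.ball p (eta p / (n + 1)) ∧ q ∈ act k g '' F k ε := by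
    intro n
    have hpos : 0 < eta p / (n + 1) := by positivity
    have hle : eta p / (n + 1) ≤ eta p := by
      rw [div_le_iff₀ (by positivity)]
      nlinarith [Nat.cast_nonneg (α := ℝ) n]
    obtain ⟨q, hq1, hq2⟩ := hcon (eta p / (n + 1)) hpos hle
    exact ⟨q, hq1, hq2⟩
  choose qf hqball hqim using hex
  choose zf hzF hzact using fun n => hqim n
  obtain ⟨Bx, my, My, A, hmy, hmaster⟩ := master_bounds hk hk1 hε hp
  have hball : ∀ n, act k g (zf n) ∈ Metric.closedBall p (eta p) := by
    intro n
    rw [hzact n]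
    apply Metric.mem_closedBall.mpr
    have := Metric.mem_ball.mp (hqball n)
    have hle : eta p / (n + 1) ≤ eta p := by
      rw [div_le_iff₀ (by positivity)]
      nlinarith [Nat.cast_nonneg (α := ℝ) n]
    linarith
  have hzbox : ∀ n, zf n ∈ Set.Icc ((-Bx, -Bx, my, my) : Pt) ((Bx, Bx, My, My) : Pt) := by
    intro n
    obtain ⟨⟨h1, h2, h3, h4, h5, h6⟩, -⟩ := hmaster g (zf n) (hzF n) (hball n)
    exact mem_box h1 h2 h3 h4 h5 h6
  obtain ⟨zl, hzl, φ, hφ, hφt⟩ := (isCompact_Icc).tendsto_subseq hzbox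
  have hzlHH : zl ∈ HH := by
    constructor
    · exact lt_of_lt_of_le hmy hzl.1.2.2.1
    · exact lt_of_lt_of_le hmy hzl.1.2.2.2
  have hzlF : zl ∈ F k ε := F_closed_limit hφt (fun n => hzF (φ n)) hzlHH
  -- q (φ n) tends to p
  have hqtend : Filter.Tendsto qf Filter.atTop (nhds p) := by
    rw [tendsto_iff_dist_tendsto_zero]
    apply squeeze_zero (fun n => dist_nonneg)
      (fun n => le_of_lt (Metric.mem_ball.mp (hqball n)))
    have h1 : Filter.Tendsto (fun n : ℕ => eta p * (1 / ((n : ℝ) + 1))) Filter.atTop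
        (nhds (eta p * 0)) :=
      tendsto_one_div_add_atTop_nhds_zero_nat.const_mul (eta p)
    rw [mul_zero] at h1
    refine h1.congr fun n => ?_
    rw [mul_one_div]
  have hqsub : Filter.Tendsto (qf ∘ φ) Filter.atTop (nhds p) :=
    hqtend.comp (StrictMono.tendsto_atTop hφ)
  have hacttend : Filter.Tendsto (fun n => act k g (zf (φ n))) Filter.atTop
      (nhds (act k g zl)) :=
    ((act_contAt k g hzlHH).tendsto).comp hφt
  have heq : (fun n => act k g (zf (φ n))) = qf ∘ φ := by
    funext n
    exact hzact (φ n)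
  rw [heq] at hacttend
  have : act k g zl = p := tendsto_nhds_unique hacttend hqsub
  exact hgp ⟨zl, hzlF, this⟩

theorem final_statement {k : ℕ} (hk : Squarefree k) (hk1 : 1 < k) {ε : ℝ} (hε : 1 < ε)
    (p : Pt) (hp : p ∈ HH) :
    ∃ lam > (0 : ℝ), ∀ g : SL k,
      (Metric.ball p lam ∩ act k g '' F k ε).Nonempty → p ∈ act k g '' F k ε := by
  have hη := eta_pos hp
  have hGfin := G_finite hk hk1 hε hp
  set G := {g : SL k | ∃ z ∈ F k ε, act k g z ∈ Metric.closedBall p (eta p)} with hGdef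
  have hδ : ∀ g : SL k, ∃ δ > 0, δ ≤ eta p ∧
      (p ∉ act k g '' F k ε → ∀ q ∈ Metric.ball p δ, q ∉ act k g '' F k ε) := by
    intro g
    by_cases hg : p ∈ act k g '' F k ε
    · exact ⟨eta p, hη, le_refl _, fun h => absurd hg h⟩
    · obtain ⟨δ, hδ0, hδeta, hav⟩ := avoid_radius hk hk1 hε hp g hg
      exact ⟨δ, hδ0, hδeta, fun _ => hav⟩
  choose δf hδ0 hδeta hδav using hδ
  rcases Set.eq_empty_or_nonempty G with hGe | hGne
  · refine ⟨eta p, hη, ?_⟩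
    intro g ⟨q, hq1, hq2⟩
    exfalso
    obtain ⟨z, hz, hzeq⟩ := hq2
    have : g ∈ G := by
      refine ⟨z, hz, ?_⟩
      rw [hzeq]
      exact Metric.mem_closedBall.mpr (le_of_lt (Metric.mem_ball.mp hq1))
    rw [hGe] at this
    exact this
  · have hTne : hGfin.toFinset.Nonempty := by
      rwa [Set.Finite.toFinset_nonempty]
    refine ⟨min (eta p) (hGfin.toFinset.inf' hTne δf), ?_, ?_⟩
    · apply lt_min hη
      rw [Finset.lt_inf'_iff]
      exact fun g _ => hδ0 g
    · intro g ⟨q, hq1, hq2⟩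
      have hqd := Metric.mem_ball.mp hq1
      have hqeta : dist q p < eta p := lt_of_lt_of_le hqd (min_le_left _ _)
      have hgG : g ∈ G := by
        obtain ⟨z, hz, hzeq⟩ := hq2
        refine ⟨z, hz, ?_⟩
        rw [hzeq]
        exact Metric.mem_closedBall.mpr (le_of_lt hqeta)
      by_contra hgp
      have hgT : g ∈ hGfin.toFinset := (Set.Finite.mem_toFinset hGfin).mpr hgG
      have hinf : hGfin.toFinset.inf' hTne δf ≤ δf g := Finset.inf'_le δf hgT
      have hqδ : q ∈ Metric.ball p (δf g) := by
        apply Metric.mem_ball.mpr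
        exact lt_of_lt_of_le hqd (le_trans (min_le_right _ _) hinf)
      exact hδav g hgp q hqδ hq2

end ProofAux

/-- For every `Z ∈ H²×H²` there exists `λ > 0` such that for every `g ∈ Γ`,
if the open ball `B(Z,λ)` meets `g(F)` then `Z ∈ g(F)`. -/
theorem exists_ball_meets_imp_mem (k : ℕ) (hk : Squarefree k) (hk1 : 1 < k)
    (e : (R k)ˣ) (he : IsFundUnit k e) (p : Pt) (hp : p ∈ HH) :
    ∃ lam > (0 : ℝ), ∀ g : SL k,
      (Metric.ball p lam ∩ act k g '' F k (eps k e)).Nonempty →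
        p ∈ act k g '' F k (eps k e) := by
  have hε : 1 < eps k e := he.1
  exact final_statement hk hk1 hε p hp

end Hilbert
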